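/- arXiv:2110.10604 — 3 statements merged into one kernel-verified Lean document; each statement's English description precedes it below -/
import Mathlib

section
/- For any function h : Ω → ℝ such that h·f is μ-integrable, the importance-weighted expectation under the multiset sampling density equals the expectation under the target density: ∫_{Ω^M} (Σ_{m=1}^M w_m(Θ) h(θ_m)) π(Θ) dμ^M(Θ) = ∫_Ω h(θ) f(θ) dμ(θ), where on {π = 0} the integrand on the left is taken to be 0. Equivalently, ∫_{Ω^M} (1/M) Σ_{m=1}^M h(θ_m) f(θ_m) ∏_{l≠m} g_l(θ_l) dμ^M(Θ) = ∫_Ω h f dμ. -/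
open MeasureTheory

/-- Theorem 1 of Kim et al. (GMSS): the importance-weighted expectation under the
multiset sampling density equals the expectation under the target density. -/
theorem gmss_importance_weighted_expectation
    {Ω : Type*} [MeasurableSpace Ω] (μ : Measure Ω) [SigmaFinite μ]
    (M : ℕ) (hM : 0 < M)
    (f : Ω → ℝ) (g : Fin M → Ω → ℝ)
    (hf_meas : Measurable f) (hf_nonneg : ∀ x, 0 ≤ f x)
    (hf_prob : ∫ x, f x ∂μ = 1)
    (hg_meas : ∀ l, Measurable (g l)) (hg_nonneg : ∀ l x, 0 ≤ g l x)
    (hg_prob : ∀ l, ∫ x, g l x ∂μ = 1)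
    (π : (Fin M → Ω) → ℝ)
    (hπ : ∀ Θ, π Θ = (1 / (M : ℝ)) *
      ∑ m : Fin M, f (Θ m) * ∏ l ∈ Finset.univ.erase m, g l (Θ l))
    (w : Fin M → (Fin M → Ω) → ℝ)
    (hw : ∀ m Θ, π Θ ≠ 0 →
      w m Θ = f (Θ m) * (∏ l ∈ Finset.univ.erase m, g l (Θ l)) / ((M : ℝ) * π Θ))
    (h : Ω → ℝ) (hh_meas : Measurable h)
    (hhf_int : Integrable (fun θ => h θ * f θ) μ) :
    (∫ Θ, (if π Θ = 0 then 0 else (∑ m : Fin M, w m Θ * h (Θ m)) * π Θ)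
        ∂(Measure.pi fun _ : Fin M => μ))
      = ∫ θ, h θ * f θ ∂μ ∧
    (∫ Θ, (1 / (M : ℝ)) *
        ∑ m : Fin M, h (Θ m) * f (Θ m) * ∏ l ∈ Finset.univ.erase m, g l (Θ l)
        ∂(Measure.pi fun _ : Fin M => μ))
      = ∫ θ, h θ * f θ ∂μ := by
  classical
  have hMne : (M : ℝ) ≠ 0 := Nat.cast_ne_zero.mpr hM.ne'
  -- pointwise equality of the two integrands
  have key : ∀ Θ : Fin M → Ω,
      (if π Θ = 0 then 0 else (∑ m : Fin M, w m Θ * h (Θ m)) * π Θ)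
      = (1 / (M : ℝ)) *
        ∑ m : Fin M, h (Θ m) * f (Θ m) * ∏ l ∈ Finset.univ.erase m, g l (Θ l) := by
    intro Θ
    by_cases hz : π Θ = 0
    · have hs : ∑ m : Fin M, f (Θ m) * ∏ l ∈ Finset.univ.erase m, g l (Θ l) = 0 := by
        have h0 := (hπ Θ).symm.trans hz
        have h1 : (1 / (M : ℝ)) ≠ 0 := by positivity
        exact (mul_eq_zero.mp h0).resolve_left h1
      have hterm : ∀ m ∈ Finset.univ, f (Θ m) * ∏ l ∈ Finset.univ.erase m, g l (Θ l) = 0 := by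
        refine (Finset.sum_eq_zero_iff_of_nonneg ?_).mp hs
        intro m _
        exact mul_nonneg (hf_nonneg _) (Finset.prod_nonneg fun l _ => hg_nonneg _ _)
      rw [if_pos hz]
      have : ∑ m : Fin M, h (Θ m) * f (Θ m) * ∏ l ∈ Finset.univ.erase m, g l (Θ l) = 0 := by
        refine Finset.sum_eq_zero fun m hm => ?_
        rw [mul_assoc, hterm m hm, mul_zero]
      rw [this, mul_zero]
    · rw [if_neg hz, Finset.sum_mul]
      rw [Finset.mul_sum]
      refine Finset.sum_congr rfl fun m _ => ?_
      rw [hw m Θ hz]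
      field_simp
  -- integrability of g
  have hg_int : ∀ l, Integrable (g l) μ := by
    intro l
    by_contra hc
    have h1 := hg_prob l
    rw [integral_undef hc] at h1
    exact one_ne_zero h1.symm
  -- work with a MeasureSpace structure so we can use `integral_fintype_prod_eq_prod`
  letI : MeasureSpace Ω := ⟨μ⟩
  have hvol : (Measure.pi fun _ : Fin M => μ) = (volume : Measure (Fin M → Ω)) := rfl
  -- each summand integrates to ∫ h f
  have hint : ∀ m : Fin M,
      ∫ Θ : Fin M → Ω, h (Θ m) * f (Θ m) * ∏ l ∈ Finset.univ.erase m, g l (Θ l)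
        ∂(Measure.pi fun _ : Fin M => μ) = ∫ θ, h θ * f θ ∂μ := by
    intro m
    set F : Fin M → Ω → ℝ := fun l θ => if l = m then h θ * f θ else g l θ with hF
    have hprod : ∀ Θ : Fin M → Ω,
        h (Θ m) * f (Θ m) * ∏ l ∈ Finset.univ.erase m, g l (Θ l) = ∏ l, F l (Θ l) := by
      intro Θ
      rw [← Finset.mul_prod_erase Finset.univ (fun l => F l (Θ l)) (Finset.mem_univ m)]
      simp only [hF, if_pos rfl]
      congr 1
      refine Finset.prod_congr rfl fun l hl => ?_
      rw [if_neg (Finset.ne_of_mem_erase hl)]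
    calc ∫ Θ : Fin M → Ω, h (Θ m) * f (Θ m) * ∏ l ∈ Finset.univ.erase m, g l (Θ l)
          ∂(Measure.pi fun _ : Fin M => μ)
        = ∫ Θ : Fin M → Ω, ∏ l, F l (Θ l) := by
          rw [hvol]; exact integral_congr_ae (Filter.Eventually.of_forall fun Θ => hprod Θ)
      _ = ∏ l, ∫ θ, F l θ := integral_fintype_prod_eq_prod (μ := fun _ => μ) F
      _ = ∫ θ, h θ * f θ ∂μ := by
          rw [← Finset.mul_prod_erase Finset.univ (fun l => ∫ θ, F l θ) (Finset.mem_univ m)]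
          have h1 : (∫ θ, F m θ) = ∫ θ, h θ * f θ ∂μ := by
            simp only [hF, if_pos rfl]; rfl
          have h2 : ∏ l ∈ Finset.univ.erase m, ∫ θ, F l θ = 1 := by
            refine Finset.prod_eq_one fun l hl => ?_
            simp only [hF, if_neg (Finset.ne_of_mem_erase hl)]
            exact hg_prob l
          rw [h1, h2, mul_one]
  -- integrability of each summand
  have hint_int : ∀ m : Fin M,
      Integrable (fun Θ : Fin M → Ω =>
        h (Θ m) * f (Θ m) * ∏ l ∈ Finset.univ.erase m, g l (Θ l))
        (Measure.pi fun _ : Fin M => μ) := by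
    intro m
    set F : Fin M → Ω → ℝ := fun l θ => if l = m then h θ * f θ else g l θ with hF
    have hFi : ∀ l, Integrable (F l) μ := by
      intro l
      by_cases hl : l = m
      · simpa [hF, hl] using hhf_int
      · simpa [hF, hl] using hg_int l
    have : Integrable (fun Θ : Fin M → Ω => ∏ l, F l (Θ l)) (Measure.pi fun _ : Fin M => μ) :=
      Integrable.fintype_prod (f := F) hFi
    refine this.congr (Filter.Eventually.of_forall fun Θ => ?_)
    show (∏ l, F l (Θ l)) = h (Θ m) * f (Θ m) * ∏ l ∈ Finset.univ.erase m, g l (Θ l)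
    symm
    rw [← Finset.mul_prod_erase Finset.univ (fun l => F l (Θ l)) (Finset.mem_univ m)]
    simp only [hF, if_pos rfl]
    congr 1
    refine Finset.prod_congr rfl fun l hl => ?_
    rw [if_neg (Finset.ne_of_mem_erase hl)]
  -- compute the second integral
  have main : (∫ Θ, (1 / (M : ℝ)) *
        ∑ m : Fin M, h (Θ m) * f (Θ m) * ∏ l ∈ Finset.univ.erase m, g l (Θ l)
        ∂(Measure.pi fun _ : Fin M => μ)) = ∫ θ, h θ * f θ ∂μ := by
    rw [integral_const_mul, integral_finset_sum _ (fun m _ => hint_int m)]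
    rw [Finset.sum_congr rfl (fun m _ => hint m)]
    rw [Finset.sum_const, Finset.card_univ, Fintype.card_fin, nsmul_eq_mul]
    rw [← mul_assoc, one_div, inv_mul_cancel₀ hMne, one_mul]
  refine ⟨?_, main⟩
  rw [← main]
  exact integral_congr_ae (Filter.Eventually.of_forall key)
end

section
/- For each index m ∈ {1,…,M} and every θ_m ∈ Ω, the marginal density of the m-th multiset element under π is a mixture of the target and the instrumental density: ∫_{Ω^{M−1}} π(θ₁,…,θ_M) ∏_{l≠m} dμ(θ_l) = (1/M) f(θ_m) + (1 − 1/M) g_m(θ_m). -/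
open MeasureTheory

/-- The marginal sampling density of the m-th multiset element is the mixture
`(1/M) f + (1 - 1/M) g_m`. -/
theorem gmss_marginal_density_mixture
    {Ω : Type*} [MeasurableSpace Ω] (μ : Measure Ω) [SigmaFinite μ]
    (M : ℕ) (hM : 0 < M)
    (f : Ω → ℝ) (g : Fin M → Ω → ℝ)
    (hf_meas : Measurable f) (hf_nonneg : ∀ x, 0 ≤ f x)
    (hf_prob : ∫ x, f x ∂μ = 1)
    (hg_meas : ∀ l, Measurable (g l)) (hg_nonneg : ∀ l x, 0 ≤ g l x)
    (hg_prob : ∀ l, ∫ x, g l x ∂μ = 1)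
    (π : (Fin M → Ω) → ℝ)
    (hπ : ∀ Θ, π Θ = (1 / (M : ℝ)) *
      ∑ m : Fin M, f (Θ m) * ∏ l ∈ Finset.univ.erase m, g l (Θ l))
    (m : Fin M) (θ : Ω) :
    ∫ η : { l : Fin M // l ≠ m } → Ω,
        π (fun l => if hl : l = m then θ else η ⟨l, hl⟩)
        ∂(Measure.pi fun _ : { l : Fin M // l ≠ m } => μ)
      = (1 / (M : ℝ)) * f θ + (1 - 1 / (M : ℝ)) * g m θ := by
  letI : MeasureSpace Ω := ⟨μ⟩
  haveI : SigmaFinite (volume : Measure Ω) := ‹SigmaFinite μ›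
  -- integrability of the densities
  have hf_int : Integrable f μ := by
    by_contra h
    rw [integral_undef h] at hf_prob
    exact one_ne_zero hf_prob.symm
  have hg_int : ∀ l, Integrable (g l) μ := by
    intro l
    by_contra h
    have := hg_prob l
    rw [integral_undef h] at this
    exact one_ne_zero this.symm
  -- the per-coordinate factor for the k-th summand
  set H : Fin M → { l : Fin M // l ≠ m } → Ω → ℝ :=
    fun k i => if (i : Fin M) = k then f else g i with hH
  have hH_int : ∀ k i, Integrable (H k i) μ := by
    intro k i
    by_cases h : (i : Fin M) = k
    · simpa [hH, h] using hf_int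
    · simpa [hH, h] using hg_int i
  have hH_prob : ∀ k i, ∫ x, H k i x ∂μ = 1 := by
    intro k i
    by_cases h : (i : Fin M) = k
    · simpa [hH, h] using hf_prob
    · simpa [hH, h] using hg_prob i
  set c : Fin M → ℝ := fun k => if k = m then f θ else g m θ with hc
  -- pointwise identity for each summand
  have key : ∀ (k : Fin M) (η : { l : Fin M // l ≠ m } → Ω),
      f ((fun l => if hl : l = m then θ else η ⟨l, hl⟩) k) *
        ∏ l ∈ Finset.univ.erase k,
          g l ((fun l => if hl : l = m then θ else η ⟨l, hl⟩) l)
      = c k * ∏ i : { l : Fin M // l ≠ m }, H k i (η i) := by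
    intro k η
    set Θ : Fin M → Ω := fun l => if hl : l = m then θ else η ⟨l, hl⟩ with hΘ
    have hΘm : Θ m = θ := by simp [hΘ]
    have hΘi : ∀ i : { l : Fin M // l ≠ m }, Θ (i : Fin M) = η i := by
      intro i
      simp [hΘ, dif_neg i.2]
    have hreindex : ∏ i : { l : Fin M // l ≠ m }, H k i (η i)
        = ∏ l ∈ Finset.univ.erase m, (if l = k then f else g l) (Θ l) := by
      rw [Finset.prod_subtype (Finset.univ.erase m) (p := fun l => l ≠ m) (by simp)
        (fun l => (if l = k then f else g l) (Θ l))]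
      exact Finset.prod_congr rfl fun i _ => by simp [hH, hΘi i]
    rw [hreindex]
    by_cases hk : k = m
    · subst hk
      have hcm : c k = f θ := by simp [hc]
      rw [hcm, hΘm]
      congr 1
      refine Finset.prod_congr rfl fun l hl => ?_
      rw [if_neg (Finset.ne_of_mem_erase hl)]
    · have hck : c k = g m θ := by simp [hc, hk]
      rw [hck]
      have hkm : k ∈ Finset.univ.erase m := Finset.mem_erase.2 ⟨hk, Finset.mem_univ k⟩
      have hmk : m ∈ Finset.univ.erase k := Finset.mem_erase.2 ⟨Ne.symm hk, Finset.mem_univ m⟩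
      rw [← Finset.mul_prod_erase _ _ hkm, ← Finset.mul_prod_erase _ _ hmk, hΘm, if_pos rfl]
      rw [Finset.prod_congr rfl
        (fun l hl => by rw [if_neg (Finset.ne_of_mem_erase hl)] :
        ∀ l ∈ (Finset.univ.erase m).erase k, (if l = k then f else g l) (Θ l) = g l (Θ l))]
      rw [Finset.erase_right_comm]
      ring
  have hrw : (fun η : { l : Fin M // l ≠ m } → Ω =>
        π (fun l => if hl : l = m then θ else η ⟨l, hl⟩))
      = fun η => (1 / (M : ℝ)) *
          ∑ k : Fin M, c k * ∏ i : { l : Fin M // l ≠ m }, H k i (η i) := by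
    funext η
    rw [hπ]
    congr 1
    exact Finset.sum_congr rfl fun k _ => key k η
  rw [hrw]
  have hpi : (Measure.pi fun _ : { l : Fin M // l ≠ m } => μ)
      = (volume : Measure ({ l : Fin M // l ≠ m } → Ω)) := rfl
  rw [hpi, integral_const_mul, integral_finset_sum (μ := volume) _ (fun k _ =>
    ((Integrable.fintype_prod (f := H k) (fun i => hH_int k i)).const_mul (c k)))]
  have hterm : ∀ k : Fin M,
      ∫ η : { l : Fin M // l ≠ m } → Ω, c k * ∏ i, H k i (η i) = c k := by
    intro k
    have hH_prob' : ∀ i, ∫ x, H k i x = 1 := hH_prob k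
    rw [integral_const_mul, integral_fintype_prod_volume_eq_prod (fun i => H k i)]
    simp [hH_prob']
  rw [Finset.sum_congr rfl fun k _ => hterm k]
  have hsum : ∑ k : Fin M, c k = f θ + ((M : ℝ) - 1) * g m θ := by
    have h1 : ∀ k ∈ Finset.univ.erase m, c k = g m θ := fun k hk => by
      simp [hc, Finset.ne_of_mem_erase hk]
    have hcm : c m = f θ := by simp [hc]
    rw [← Finset.add_sum_erase _ _ (Finset.mem_univ m), Finset.sum_congr rfl h1,
      Finset.sum_const, Finset.card_erase_of_mem (Finset.mem_univ m), hcm]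
    simp only [Finset.card_univ, Fintype.card_fin, nsmul_eq_mul]
    rw [Nat.cast_sub hM]
    ring
  rw [hsum]
  have hM0 : (M : ℝ) ≠ 0 := Nat.cast_ne_zero.2 hM.ne'
  field_simp
end

section
/- Let Θ^{(1)}, …, Θ^{(B)} be random elements of Ω^M defined on a common probability space, each distributed according to the probability measure with density π with respect to μ^M (they need not be independent). For any h : Ω → ℝ with h·f μ-integrable and with the weighted summand Σ_m w_m(Θ^{(b)}) h(θ_m^{(b)}) integrable for each b, the GMSS estimator is unbiased: E[(1/B) Σ_{b=1}^B Σ_{m=1}^M w_m(Θ^{(b)}) h(θ_m^{(b)})] = ∫_Ω h(θ) f(θ) dμ(θ). -/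
open MeasureTheory
open scoped NNReal ENNReal

/-- Unbiasedness of the GMSS estimator: if each draw `Θ^(b)` is distributed
according to the multiset sampling density `π` (not necessarily independently),
then the importance-weighted average is an unbiased estimator of `∫ h f dμ`. -/
theorem gmss_estimator_unbiased
    {Ω : Type*} [MeasurableSpace Ω] (μ : Measure Ω) [SigmaFinite μ]
    {α : Type*} [MeasurableSpace α] (P : Measure α) [IsProbabilityMeasure P]
    (M B : ℕ) (hM : 0 < M) (hB : 0 < B)
    (f : Ω → ℝ) (g : Fin M → Ω → ℝ)
    (hf_meas : Measurable f) (hf_nonneg : ∀ x, 0 ≤ f x)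
    (hf_prob : ∫ x, f x ∂μ = 1)
    (hg_meas : ∀ l, Measurable (g l)) (hg_nonneg : ∀ l x, 0 ≤ g l x)
    (hg_prob : ∀ l, ∫ x, g l x ∂μ = 1)
    (π : (Fin M → Ω) → ℝ)
    (hπ : ∀ Θ, π Θ = (1 / (M : ℝ)) *
      ∑ m : Fin M, f (Θ m) * ∏ l ∈ Finset.univ.erase m, g l (Θ l))
    (w : Fin M → (Fin M → Ω) → ℝ)
    (hw : ∀ m Θ, π Θ ≠ 0 →
      w m Θ = f (Θ m) * (∏ l ∈ Finset.univ.erase m, g l (Θ l)) / ((M : ℝ) * π Θ))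
    (hw0 : ∀ m Θ, π Θ = 0 → w m Θ = 0)
    (Θ : Fin B → α → (Fin M → Ω))
    (hΘ_meas : ∀ b, Measurable (Θ b))
    (hΘ_law : ∀ b, Measure.map (Θ b) P =
      (Measure.pi fun _ : Fin M => μ).withDensity fun t => ENNReal.ofReal (π t))
    (h : Ω → ℝ) (hh_meas : Measurable h)
    (hhf_int : Integrable (fun θ => h θ * f θ) μ)
    (h_int : ∀ b, Integrable (fun a => ∑ m : Fin M, w m (Θ b a) * h (Θ b a m)) P) :
    ∫ a, (1 / (B : ℝ)) * ∑ b : Fin B, ∑ m : Fin M, w m (Θ b a) * h (Θ b a m) ∂P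
      = ∫ θ, h θ * f θ ∂μ := by
  classical
  letI : MeasureSpace Ω := ⟨μ⟩
  haveI : SigmaFinite (volume : Measure Ω) := ‹SigmaFinite μ›
  have hM0 : (M : ℝ) ≠ 0 := Nat.cast_ne_zero.mpr hM.ne'
  have hB0 : (B : ℝ) ≠ 0 := Nat.cast_ne_zero.mpr hB.ne'
  -- measurability and nonnegativity of π
  have hπ_eq : π = fun Θ => (1 / (M : ℝ)) *
      ∑ m : Fin M, f (Θ m) * ∏ l ∈ Finset.univ.erase m, g l (Θ l) := funext hπ
  have hπ_meas : Measurable π := by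
    rw [hπ_eq]
    exact measurable_const.mul (Finset.measurable_sum _ fun m _ =>
      ((hf_meas.comp (measurable_pi_apply m)).mul
        (Finset.measurable_prod _ fun l _ => (hg_meas l).comp (measurable_pi_apply l))))
  have hπ_nonneg : ∀ t, 0 ≤ π t := fun t => by
    rw [hπ]
    exact mul_nonneg (by positivity)
      (Finset.sum_nonneg fun m _ => mul_nonneg (hf_nonneg _)
        (Finset.prod_nonneg fun l _ => hg_nonneg _ _))
  -- explicit formula for w and its measurability
  have hw_eq : ∀ m, w m = fun t => if π t = 0 then 0 else
      f (t m) * (∏ l ∈ Finset.univ.erase m, g l (t l)) / ((M : ℝ) * π t) := by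
    intro m; funext t
    by_cases h0 : π t = 0
    · simp [h0, hw0 m t h0]
    · simp [h0, hw m t h0]
  have hw_meas : ∀ m, Measurable (w m) := by
    intro m
    rw [hw_eq m]
    refine Measurable.ite (hπ_meas (measurableSet_singleton 0)) measurable_const ?_
    exact (((hf_meas.comp (measurable_pi_apply m)).mul
      (Finset.measurable_prod _ fun l _ => (hg_meas l).comp (measurable_pi_apply l))).div
      (measurable_const.mul hπ_meas))
  -- the key pointwise identity
  have key : ∀ t : Fin M → Ω, π t * ∑ m : Fin M, w m t * h (t m)
      = (1 / (M : ℝ)) * ∑ m : Fin M,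
          (h (t m) * f (t m)) * ∏ l ∈ Finset.univ.erase m, g l (t l) := by
    intro t
    by_cases h0 : π t = 0
    · have hsum : ∑ m : Fin M, f (t m) * ∏ l ∈ Finset.univ.erase m, g l (t l) = 0 := by
        have := hπ t
        rw [h0] at this
        field_simp at this
        linarith [this]
      have hzero : ∀ m ∈ Finset.univ,
          f (t m) * ∏ l ∈ Finset.univ.erase m, g l (t l) = (0 : ℝ) := by
        rw [← Finset.sum_eq_zero_iff_of_nonneg]
        · exact hsum
        · exact fun m _ => mul_nonneg (hf_nonneg _)
            (Finset.prod_nonneg fun l _ => hg_nonneg _ _)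
      rw [h0, zero_mul]
      symm
      rw [mul_eq_zero]
      right
      refine Finset.sum_eq_zero fun m hm => ?_
      rw [mul_assoc, hzero m hm, mul_zero]
    · rw [Finset.mul_sum, Finset.mul_sum]
      refine Finset.sum_congr rfl fun m _ => ?_
      rw [hw m t h0]
      field_simp
  -- the per-coordinate functions whose product is the m-th summand
  set G : Fin M → Fin M → Ω → ℝ :=
    fun m l => if l = m then (fun x => h x * f x) else g l with hG
  have hG_int : ∀ m l, Integrable (G m l) μ := by
    intro m l
    by_cases hlm : l = m
    · simp only [hG, hlm, if_pos rfl]; exact hhf_int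
    · simp only [hG, if_neg hlm]
      by_contra hc
      have := hg_prob l
      rw [integral_undef hc] at this
      norm_num at this
  have hprod_eq : ∀ m (t : Fin M → Ω),
      (h (t m) * f (t m)) * ∏ l ∈ Finset.univ.erase m, g l (t l)
        = ∏ l : Fin M, G m l (t l) := by
    intro m t
    rw [← Finset.mul_prod_erase Finset.univ (fun l => G m l (t l)) (Finset.mem_univ m)]
    congr 1
    · simp [hG]
    · refine Finset.prod_congr rfl fun l hl => ?_
      have : l ≠ m := Finset.ne_of_mem_erase hl
      simp [hG, this]
  -- the expectation over one draw
  have one_draw : ∀ b, ∫ a, ∑ m : Fin M, w m (Θ b a) * h (Θ b a m) ∂P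
      = ∫ θ, h θ * f θ ∂μ := by
    intro b
    set F : (Fin M → Ω) → ℝ := fun t => ∑ m : Fin M, w m t * h (t m) with hF
    have hF_meas : Measurable F := by
      refine Finset.measurable_sum _ fun m _ => ?_
      exact (hw_meas m).mul (hh_meas.comp (measurable_pi_apply m))
    have step1 : ∫ a, F (Θ b a) ∂P = ∫ t, F t ∂(Measure.map (Θ b) P) :=
      (integral_map (hΘ_meas b).aemeasurable hF_meas.aestronglyMeasurable).symm
    have step2 : ∫ t, F t ∂(Measure.map (Θ b) P)
        = ∫ t, π t * F t ∂(Measure.pi fun _ : Fin M => μ) := by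
      rw [hΘ_law b]
      have : (fun t : Fin M → Ω => ENNReal.ofReal (π t))
          = fun t => ((Real.toNNReal (π t) : ℝ≥0) : ℝ≥0∞) := rfl
      rw [this, integral_withDensity_eq_integral_smul (hπ_meas.real_toNNReal) F]
      refine integral_congr_ae (Filter.Eventually.of_forall fun t => ?_)
      simp [NNReal.smul_def, Real.coe_toNNReal _ (hπ_nonneg t)]
    have step3 : ∫ t, π t * F t ∂(Measure.pi fun _ : Fin M => μ)
        = ∫ t, (1 / (M : ℝ)) * ∑ m : Fin M, ∏ l : Fin M, G m l (t l)
            ∂(Measure.pi fun _ : Fin M => μ) := by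
      refine integral_congr_ae (Filter.Eventually.of_forall fun t => ?_)
      show π t * (∑ m : Fin M, w m t * h (t m)) = _
      rw [key t]
      congr 1
      exact Finset.sum_congr rfl fun m _ => hprod_eq m t
    have hvol : (Measure.pi fun _ : Fin M => μ) = (volume : Measure (Fin M → Ω)) :=
      (volume_pi).symm
    have step4 : ∫ t, (1 / (M : ℝ)) * ∑ m : Fin M, ∏ l : Fin M, G m l (t l)
            ∂(Measure.pi fun _ : Fin M => μ) = ∫ θ, h θ * f θ ∂μ := by
      rw [integral_const_mul _ _, integral_finset_sum _
        (fun m _ => Integrable.fintype_prod (f := G m) (fun l => hG_int m l)), hvol]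
      have : ∀ m ∈ Finset.univ, ∫ t : Fin M → Ω, ∏ l : Fin M, G m l (t l)
          = ∫ θ, h θ * f θ ∂μ := by
        intro m _
        rw [← hvol, integral_fintype_prod_eq_prod (G m)]
        refine Finset.prod_eq_single_of_mem m (Finset.mem_univ m) ?_ |>.trans ?_
        · intro l _ hlm
          have : ∫ x, G m l x = ∫ x, g l x ∂μ := by simp only [hG, if_neg hlm]; rfl
          exact this.trans (hg_prob l)
        · simp only [hG, if_pos rfl]
      rw [Finset.sum_congr rfl this, Finset.sum_const, Finset.card_univ, Fintype.card_fin,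
        nsmul_eq_mul]
      field_simp
    show ∫ a, F (Θ b a) ∂P = ∫ θ, h θ * f θ ∂μ
    rw [step1, step2, step3, step4]
  rw [integral_const_mul _ _, integral_finset_sum _ (fun b _ => h_int b)]
  rw [Finset.sum_congr rfl (fun b _ => one_draw b), Finset.sum_const, Finset.card_univ,
    Fintype.card_fin, nsmul_eq_mul]
  field_simp
end
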